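/- Let ψ : {0,1}ⁿ → ℝ be a pseudo-Boolean function. For every x ∈ ℝⁿ, L_ψ(x) = ψ(0) + L_ψ(x⁺) − L_{ψ^d}(x⁻), where ψ^d is the dual of ψ. -/

import Mathlib

open Finset

/-- The indicator tuple `1_A` of a subset `A ⊆ [n]`. -/
def ind {n : ℕ} (A : Finset (Fin n)) : Fin n → ℝ := fun i => if i ∈ A then 1 else 0

/-- The Möbius transform of a pseudo-Boolean function (viewed as a set function). -/
def mobius {n : ℕ} (ψ : Finset (Fin n) → ℝ) (A : Finset (Fin n)) : ℝ :=
  ∑ B ∈ A.powerset, (-1 : ℝ) ^ (A.card - B.card) * ψ B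

/-- `min_{i ∈ A} x i` (with value `0` for `A = ∅`). -/
def minOnPB {n : ℕ} (A : Finset (Fin n)) (x : Fin n → ℝ) : ℝ :=
  if h : A.Nonempty then A.inf' h x else 0

/-- The Lovász extension of a pseudo-Boolean function `ψ` (viewed as a set function):
`L_ψ(x) = a_ψ(∅) + Σ_{∅ ≠ A ⊆ [n]} a_ψ(A) · min_{i ∈ A} x_i`. -/
def Lov {n : ℕ} (ψ : Finset (Fin n) → ℝ) (x : Fin n → ℝ) : ℝ :=
  mobius ψ ∅ + ∑ A : Finset (Fin n), mobius ψ A * minOnPB A x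

/-- `x ∈ ℝⁿ_σ`, i.e. `x_{σ(1)} ≤ ⋯ ≤ x_{σ(n)}`. -/
def inRσ {n : ℕ} (σ : Equiv.Perm (Fin n)) (x : Fin n → ℝ) : Prop :=
  ∀ i j : Fin n, i ≤ j → x (σ i) ≤ x (σ j)

/-- `A_σ^↑(k) = {σ(j) : j ≥ k}` (0-indexed; `Aup σ n = ∅`). -/
def Aup {n : ℕ} (σ : Equiv.Perm (Fin n)) (k : ℕ) : Finset (Fin n) :=
  (Finset.univ.filter fun j : Fin n => k ≤ (j : ℕ)).image σ

/-- `A_σ^↓(k) = {σ(j) : j < k}` (0-indexed; `Adown σ 0 = ∅`). -/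
def Adown {n : ℕ} (σ : Equiv.Perm (Fin n)) (k : ℕ) : Finset (Fin n) :=
  (Finset.univ.filter fun j : Fin n => (j : ℕ) < k).image σ

/-- The dual `ψ^d` of a pseudo-Boolean function `ψ` (as a set function):
`ψ^d(1_A) = ψ(0) + ψ(1) − ψ(1 − 1_A)`. -/
def dualPB {n : ℕ} (ψ : Finset (Fin n) → ℝ) : Finset (Fin n) → ℝ :=
  fun A => ψ ∅ + ψ Finset.univ - ψ Aᶜ

def maxOnPB {n : ℕ} (A : Finset (Fin n)) (x : Fin n → ℝ) : ℝ :=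
  if h : A.Nonempty then A.sup' h x else 0

lemma neg_one_pow_sub' (a b : ℕ) (h : b ≤ a) :
    ((-1 : ℝ)) ^ (a - b) = (-1) ^ a * (-1) ^ b := by
  have h1 : ((-1 : ℝ)) ^ (a - b) * (-1) ^ b = (-1) ^ a := by
    rw [← pow_add, Nat.sub_add_cancel h]
  have h2 : ((-1 : ℝ)) ^ b * (-1) ^ b = 1 := by
    rw [← pow_add]; exact Even.neg_one_pow ⟨b, rfl⟩
  calc ((-1 : ℝ)) ^ (a - b) = (-1) ^ (a - b) * ((-1) ^ b * (-1) ^ b) := by rw [h2, mul_one]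
    _ = ((-1) ^ (a - b) * (-1) ^ b) * (-1) ^ b := by ring
    _ = (-1) ^ a * (-1) ^ b := by rw [h1]

lemma inf'_comp_anti {n : ℕ} (A : Finset (Fin n)) (h : A.Nonempty) (x : Fin n → ℝ)
    (g : ℝ → ℝ) (hg : ∀ a b : ℝ, g (min a b) = max (g a) (g b)) :
    A.sup' h (fun i => g (x i)) = g (A.inf' h x) := by
  induction h using Finset.Nonempty.cons_induction with
  | singleton a => simp
  | cons a s ha hs ih =>
      rw [Finset.sup'_cons (H := hs), Finset.inf'_cons (H := hs), ih]
      have := hg (x a) (s.inf' hs x)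
      simp only [min_def, max_def] at *
      rw [this]

lemma inf'_comp_mono {n : ℕ} (A : Finset (Fin n)) (h : A.Nonempty) (x : Fin n → ℝ)
    (g : ℝ → ℝ) (hg : ∀ a b : ℝ, g (min a b) = min (g a) (g b)) :
    A.inf' h (fun i => g (x i)) = g (A.inf' h x) := by
  induction h using Finset.Nonempty.cons_induction with
  | singleton a => simp
  | cons a s ha hs ih =>
      rw [Finset.inf'_cons (H := hs), Finset.inf'_cons (H := hs), ih]
      have := hg (x a) (s.inf' hs x)
      simp only [min_def] at *
      rw [this]

lemma sup'_comp_mono {n : ℕ} (A : Finset (Fin n)) (h : A.Nonempty) (x : Fin n → ℝ)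
    (g : ℝ → ℝ) (hg : ∀ a b : ℝ, g (max a b) = max (g a) (g b)) :
    A.sup' h (fun i => g (x i)) = g (A.sup' h x) := by
  induction h using Finset.Nonempty.cons_induction with
  | singleton a => simp
  | cons a s ha hs ih =>
      rw [Finset.sup'_cons (H := hs), Finset.sup'_cons (H := hs), ih]
      have := hg (x a) (s.sup' hs x)
      simp only [max_def] at *
      rw [this]

lemma minOn_pos {n : ℕ} (A : Finset (Fin n)) (x : Fin n → ℝ) :
    minOnPB A (fun i => max (x i) 0) = max (minOnPB A x) 0 := by
  unfold minOnPB
  split_ifs with h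
  · exact inf'_comp_mono A h x (fun t => max t 0)
      (fun a b => (max_min_distrib_right a b 0))
  · simp

lemma maxOn_neg {n : ℕ} (A : Finset (Fin n)) (x : Fin n → ℝ) :
    maxOnPB A (fun i => max (-(x i)) 0) = max (-(minOnPB A x)) 0 := by
  unfold maxOnPB minOnPB
  split_ifs with h
  · refine inf'_comp_anti A h x (fun t => max (-t) 0) (fun a b => ?_)
    have h1 : -(min a b) = max (-a) (-b) := by
      rcases le_total a b with h | h <;>
        simp [min_eq_left, min_eq_right, h, max_eq_left, max_eq_right, neg_le_neg h]
    show max (-(min a b)) 0 = max (max (-a) 0) (max (-b) 0)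
    rw [h1, max_max_max_comm, max_self]
  · simp

lemma minOn_empty {n : ℕ} (x : Fin n → ℝ) : minOnPB (∅ : Finset (Fin n)) x = 0 := by
  simp [minOnPB]

lemma IE {n : ℕ} (A : Finset (Fin n)) (y : Fin n → ℝ) :
    maxOnPB A y = ∑ B ∈ A.powerset, (-1 : ℝ) ^ (B.card + 1) * minOnPB B y := by
  induction A using Finset.induction generalizing y with
  | empty => simp [maxOnPB, minOnPB]
  | @insert i A hi ih =>
      rw [Finset.sum_powerset_insert hi, ← ih y]
      set z : Fin n → ℝ := fun j => min (y j) (y i) with hzdef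
      have hcard : ∀ B ∈ A.powerset, (insert i B).card = B.card + 1 := by
        intro B hB
        exact Finset.card_insert_of_notMem
          (fun hiB => hi (Finset.mem_powerset.mp hB hiB))
      have hsum2 : ∑ B ∈ A.powerset, (-1 : ℝ) ^ ((insert i B).card + 1) * minOnPB (insert i B) y
          = y i - maxOnPB A z := by
        rw [ih z]
        have key : ∑ B ∈ A.powerset,
            ((-1 : ℝ) ^ ((insert i B).card + 1) * minOnPB (insert i B) y
              + (-1 : ℝ) ^ (B.card + 1) * minOnPB B z) = y i := by
          rw [Finset.sum_eq_single_of_mem (∅ : Finset (Fin n)) (Finset.empty_mem_powerset A)]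
          · simp [minOnPB, maxOnPB]
          · intro B hB hBne
            have hBne' : B.Nonempty := Finset.nonempty_iff_ne_empty.mpr hBne
            have h1 : minOnPB (insert i B) y = minOnPB B z := by
              unfold minOnPB
              rw [dif_pos (Finset.insert_nonempty i B), dif_pos hBne']
              rw [Finset.inf'_insert (H := hBne')]
              rw [inf'_comp_mono B hBne' y (fun t => min t (y i))
                (fun a b => by
                  rcases le_total a b with h | h <;>
                    simp [min_eq_left, min_eq_right, h, min_le_min h] <;>
                  · rw [min_eq_right]
                    exact min_le_min h le_rfl)]
              exact inf_comm _ _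
            rw [hcard B hB, h1]
            ring
        have := Finset.sum_add_distrib.symm.trans key
        linarith [Finset.sum_add_distrib (s := A.powerset)
          (f := fun B => (-1 : ℝ) ^ ((insert i B).card + 1) * minOnPB (insert i B) y)
          (g := fun B => (-1 : ℝ) ^ (B.card + 1) * minOnPB B z)]
      rw [hsum2]
      rcases A.eq_empty_or_nonempty with hA | hA
      · subst hA
        simp [maxOnPB, minOnPB]
      · have h1 : maxOnPB A z = min (maxOnPB A y) (y i) := by
          unfold maxOnPB
          rw [dif_pos hA, dif_pos hA]
          exact sup'_comp_mono A hA y (fun t => min t (y i))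
            (fun a b => min_max_distrib_right a b (y i))
        have h2 : maxOnPB (insert i A) y = max (y i) (maxOnPB A y) := by
          unfold maxOnPB
          rw [dif_pos (Finset.insert_nonempty i A), dif_pos hA]
          exact Finset.sup'_insert (H := hA) (f := y)
        rw [h1, h2]
        have := min_add_max (maxOnPB A y) (y i)
        rcases le_total (maxOnPB A y) (y i) with h | h <;>
          simp [min_eq_left, min_eq_right, max_eq_left, max_eq_right, h] <;> linarith

lemma alt_sum_superset {n : ℕ} (U : Finset (Fin n)) :
    ∑ S ∈ Finset.univ.filter (fun S : Finset (Fin n) => U ⊆ S), ((-1 : ℝ)) ^ S.card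
      = if U = Finset.univ then (-1 : ℝ) ^ n else 0 := by
  have hb : ∑ S ∈ Finset.univ.filter (fun S : Finset (Fin n) => U ⊆ S), ((-1 : ℝ)) ^ S.card
      = ∑ D ∈ Uᶜ.powerset, ((-1 : ℝ)) ^ n * ((-1 : ℝ)) ^ D.card := by
    refine Finset.sum_bij' (fun S _ => Sᶜ) (fun D _ => Dᶜ) ?_ ?_ ?_ ?_ ?_
    · intro S hS
      simp only [Finset.mem_filter, Finset.mem_univ, true_and] at hS
      exact Finset.mem_powerset.mpr (Finset.compl_subset_compl.mpr hS)
    · intro D hD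
      simp only [Finset.mem_filter, Finset.mem_univ, true_and]
      have hD' := Finset.compl_subset_compl.mpr (Finset.mem_powerset.mp hD)
      simpa using hD'
    · intro S _; simp
    · intro D _; simp
    · intro S hS
      have h1 : (Sᶜ : Finset (Fin n)).card = n - S.card := by
        simp [Finset.card_compl]
      have h2 : S.card ≤ n := by
        simpa using Finset.card_le_card (Finset.subset_univ S)
      have hnn : ((-1 : ℝ)) ^ n * (-1) ^ n = 1 := by
        rw [← pow_add]; exact Even.neg_one_pow ⟨n, rfl⟩
      rw [h1, neg_one_pow_sub' n S.card h2, ← mul_assoc, hnn, one_mul]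
  rw [hb, ← Finset.mul_sum]
  have := Finset.sum_powerset_neg_one_pow_card (x := Uᶜ)
  have hcast : ∑ D ∈ Uᶜ.powerset, ((-1 : ℝ)) ^ D.card
      = if Uᶜ = ∅ then 1 else 0 := by
    exact_mod_cast congrArg (fun z : ℤ => (z : ℝ)) this
  rw [hcast]
  by_cases h : U = Finset.univ
  · simp [h]
  · have : Uᶜ ≠ ∅ := by
      simp only [ne_eq, Finset.compl_eq_empty_iff]
      exact h
    simp [h, this]

lemma powerset_eq_filter {n : ℕ} (A : Finset (Fin n)) :
    A.powerset = Finset.univ.filter (fun B => B ⊆ A) := by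
  ext B; simp

lemma mobius_eq_if {n : ℕ} (ψ : Finset (Fin n) → ℝ) (S : Finset (Fin n)) :
    mobius ψ S = ∑ T : Finset (Fin n),
      if T ⊆ S then (-1 : ℝ) ^ S.card * (-1 : ℝ) ^ T.card * ψ T else 0 := by
  unfold mobius
  rw [powerset_eq_filter, Finset.sum_filter]
  refine Finset.sum_congr rfl fun T _ => ?_
  split_ifs with h
  · rw [neg_one_pow_sub' _ _ (Finset.card_le_card h)]
  · rfl

lemma sum_if_subset_mul {n : ℕ} (c : Finset (Fin n) → ℝ) (r : ℝ) (B : Finset (Fin n)) :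
    ∑ A : Finset (Fin n), (if B ⊆ A then c A * r else 0)
      = (∑ A ∈ Finset.univ.filter (fun A => B ⊆ A), c A) * r := by
  rw [Finset.sum_mul, ← Finset.sum_filter]

lemma union_eq_univ_iff {n : ℕ} (A T : Finset (Fin n)) :
    A ∪ T = Finset.univ ↔ Aᶜ ⊆ T := by
  constructor
  · intro h i hi
    have : i ∈ A ∪ T := h ▸ Finset.mem_univ i
    rcases Finset.mem_union.mp this with h' | h'
    · exact absurd h' (Finset.mem_compl.mp hi)
    · exact h'
  · intro h
    apply Finset.eq_univ_of_forall
    intro i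
    by_cases hi : i ∈ A
    · exact Finset.mem_union_left _ hi
    · exact Finset.mem_union_right _ (h (Finset.mem_compl.mpr hi))

lemma sum_mobius_superset {n : ℕ} (ψ : Finset (Fin n) → ℝ) (A : Finset (Fin n)) :
    ∑ S ∈ Finset.univ.filter (fun S => A ⊆ S), mobius ψ S
      = ∑ T ∈ Finset.univ.filter (fun T => Aᶜ ⊆ T),
          (-1 : ℝ) ^ n * (-1 : ℝ) ^ T.card * ψ T := by
  rw [Finset.sum_filter]
  have step1 : ∀ S : Finset (Fin n), (if A ⊆ S then mobius ψ S else 0)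
      = ∑ T : Finset (Fin n),
          if A ⊆ S ∧ T ⊆ S then (-1 : ℝ) ^ S.card * (-1 : ℝ) ^ T.card * ψ T else 0 := by
    intro S
    split_ifs with h
    · rw [mobius_eq_if]
      refine Finset.sum_congr rfl fun T _ => ?_
      simp [h]
    · refine (Finset.sum_eq_zero fun T _ => ?_).symm
      simp [h]
  simp_rw [step1]
  rw [Finset.sum_comm]
  rw [Finset.sum_filter]
  refine Finset.sum_congr rfl fun T _ => ?_
  have hcond : ∀ S : Finset (Fin n), (A ⊆ S ∧ T ⊆ S) ↔ A ∪ T ⊆ S :=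
    fun S => (Finset.union_subset_iff).symm
  simp_rw [hcond]
  have : ∑ S : Finset (Fin n),
      (if A ∪ T ⊆ S then (-1 : ℝ) ^ S.card * (-1 : ℝ) ^ T.card * ψ T else 0)
      = (∑ S ∈ Finset.univ.filter (fun S => A ∪ T ⊆ S), (-1 : ℝ) ^ S.card)
          * ((-1 : ℝ) ^ T.card * ψ T) := by
    rw [Finset.sum_mul, ← Finset.sum_filter]
    refine Finset.sum_congr rfl fun S _ => by ring
  rw [this, alt_sum_superset]
  by_cases h : Aᶜ ⊆ T
  · rw [if_pos ((union_eq_univ_iff A T).mpr h), if_pos h]; ring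
  · rw [if_neg (fun hu => h ((union_eq_univ_iff A T).mp hu)), if_neg h, zero_mul]

lemma mobius_dual {n : ℕ} (ψ : Finset (Fin n) → ℝ) (A : Finset (Fin n)) (hA : A ≠ ∅) :
    mobius (dualPB ψ) A
      = (-1 : ℝ) ^ (A.card + 1) * ∑ S ∈ Finset.univ.filter (fun S => A ⊆ S), mobius ψ S := by
  rw [sum_mobius_superset]
  have hAne : A.Nonempty := Finset.nonempty_iff_ne_empty.mpr hA
  unfold mobius dualPB
  have hL : ∑ B ∈ A.powerset, (-1 : ℝ) ^ (A.card - B.card) * (ψ ∅ + ψ Finset.univ - ψ Bᶜ)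
      = ∑ B ∈ A.powerset, ((-1 : ℝ) ^ A.card * (ψ ∅ + ψ Finset.univ) * (-1 : ℝ) ^ B.card
          - (-1 : ℝ) ^ A.card * (-1 : ℝ) ^ B.card * ψ Bᶜ) := by
    refine Finset.sum_congr rfl fun B hB => ?_
    rw [neg_one_pow_sub' _ _ (Finset.card_le_card (Finset.mem_powerset.mp hB))]
    ring
  rw [hL, Finset.sum_sub_distrib]
  have hzero : ∑ B ∈ A.powerset,
      (-1 : ℝ) ^ A.card * (ψ ∅ + ψ Finset.univ) * (-1 : ℝ) ^ B.card = 0 := by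
    rw [← Finset.mul_sum]
    have := Finset.sum_powerset_neg_one_pow_card_of_nonempty hAne
    have hcast : ∑ B ∈ A.powerset, ((-1 : ℝ)) ^ B.card = 0 := by
      exact_mod_cast congrArg (fun z : ℤ => (z : ℝ)) this
    rw [hcast, mul_zero]
  rw [hzero]
  have hbij : ∑ B ∈ A.powerset, (-1 : ℝ) ^ A.card * (-1 : ℝ) ^ B.card * ψ Bᶜ
      = ∑ T ∈ Finset.univ.filter (fun T => Aᶜ ⊆ T),
          (-1 : ℝ) ^ A.card * ((-1 : ℝ) ^ n * (-1 : ℝ) ^ T.card) * ψ T := by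
    refine Finset.sum_bij' (fun B _ => Bᶜ) (fun T _ => Tᶜ) ?_ ?_ ?_ ?_ ?_
    · intro B hB
      simp only [Finset.mem_filter, Finset.mem_univ, true_and]
      exact Finset.compl_subset_compl.mpr (Finset.mem_powerset.mp hB)
    · intro T hT
      simp only [Finset.mem_filter, Finset.mem_univ, true_and] at hT
      have := Finset.compl_subset_compl.mpr hT
      simpa using this
    · intro B _; simp
    · intro T _; simp
    · intro B hB
      have h1 : (Bᶜ : Finset (Fin n)).card = n - B.card := by
        simp [Finset.card_compl]
      have h2 : B.card ≤ n := by
        simpa using Finset.card_le_card (Finset.subset_univ B)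
      have hnn : ((-1 : ℝ)) ^ n * (-1) ^ n = 1 := by
        rw [← pow_add]; exact Even.neg_one_pow ⟨n, rfl⟩
      rw [h1, neg_one_pow_sub' n B.card h2]
      rw [show (-1 : ℝ) ^ A.card * ((-1 : ℝ) ^ n * ((-1 : ℝ) ^ n * (-1 : ℝ) ^ B.card))
          = (-1 : ℝ) ^ A.card * (((-1 : ℝ) ^ n * (-1 : ℝ) ^ n) * (-1 : ℝ) ^ B.card) from by ring,
        hnn, one_mul]
  rw [hbij, Finset.mul_sum, zero_sub, ← Finset.sum_neg_distrib]
  refine Finset.sum_congr rfl fun T _ => ?_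
  rw [pow_succ]
  ring

lemma mobius_empty {n : ℕ} (ψ : Finset (Fin n) → ℝ) : mobius ψ ∅ = ψ ∅ := by
  simp [mobius]

lemma Lov_dual {n : ℕ} (ψ : Finset (Fin n) → ℝ) (y : Fin n → ℝ) :
    Lov (dualPB ψ) y = ψ ∅ + ∑ A : Finset (Fin n), mobius ψ A * maxOnPB A y := by
  unfold Lov
  have h0 : mobius (dualPB ψ) ∅ = ψ ∅ := by
    rw [mobius_empty]; simp [dualPB]
  rw [h0]
  congr 1
  have hR : ∑ A : Finset (Fin n), mobius ψ A * maxOnPB A y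
      = ∑ B : Finset (Fin n),
          ((∑ A ∈ Finset.univ.filter (fun A => B ⊆ A), mobius ψ A)
            * ((-1 : ℝ) ^ (B.card + 1) * minOnPB B y)) := by
    simp_rw [IE, Finset.mul_sum]
    have step : ∀ A : Finset (Fin n),
        ∑ B ∈ A.powerset, mobius ψ A * ((-1 : ℝ) ^ (B.card + 1) * minOnPB B y)
        = ∑ B : Finset (Fin n),
            if B ⊆ A then mobius ψ A * ((-1 : ℝ) ^ (B.card + 1) * minOnPB B y) else 0 := by
      intro A
      rw [powerset_eq_filter, Finset.sum_filter]
    simp_rw [step]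
    rw [Finset.sum_comm]
    refine Finset.sum_congr rfl fun B _ => ?_
    exact sum_if_subset_mul (fun A => mobius ψ A) _ B
  rw [hR]
  refine Finset.sum_congr rfl fun B _ => ?_
  rcases eq_or_ne B ∅ with hB | hB
  · subst hB
    simp [minOnPB]
  · rw [mobius_dual ψ B hB]
    ring

/-- `L_ψ(x) = ψ(0) + L_ψ(x⁺) − L_{ψ^d}(x⁻)`. -/
theorem stmt2 {n : ℕ} (ψ : Finset (Fin n) → ℝ) (x : Fin n → ℝ) :
    Lov ψ x = ψ ∅ + Lov ψ (fun i => max (x i) 0)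
      - Lov (dualPB ψ) (fun i => max (-(x i)) 0) := by
  rw [Lov_dual]
  unfold Lov
  rw [mobius_empty]
  have h1 : ∀ A : Finset (Fin n),
      minOnPB A (fun i => max (x i) 0) = max (minOnPB A x) 0 := fun A => minOn_pos A x
  have h2 : ∀ A : Finset (Fin n),
      maxOnPB A (fun i => max (-(x i)) 0) = max (-(minOnPB A x)) 0 := fun A => maxOn_neg A x
  simp_rw [h1, h2]
  have h3 : ∀ A : Finset (Fin n),
      mobius ψ A * minOnPB A x
        = mobius ψ A * max (minOnPB A x) 0 - mobius ψ A * max (-(minOnPB A x)) 0 := by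
    intro A
    rw [← mul_sub, max_zero_sub_max_neg_zero_eq_self]
  simp_rw [h3]
  rw [Finset.sum_sub_distrib]
  ring
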